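/- Let X be a pretree and let τ_s be its shadow topology, i.e. the topology on X generated by taking the complements of the shadows S_u^v = {x : u ∈ [x,v]} (for all pairs u ≠ v) as an open subbase (so that the shadows form a subbase for the closed sets). If (X, τ_s) is compact and Hausdorff, then every monotone function f : X → ℝ (i.e., ⟨u,w,v⟩ implies min(f(u), f(v)) ≤ f(w) ≤ max(f(u), f(v))) is fragmented: for every nonempty τ_s-closed subset Y ⊆ X the restriction f|_Y has at least one point of continuity. -/

import Mathlib

/-- A pretree: a ternary relation `R` satisfying the axioms (B1), (B2), (B3). -/
structure IsPretree {X : Type*} (R : X → X → X → Prop) : Prop where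
  b1 : ∀ a b c : X, R a b c → R c b a
  b2 : ∀ a b c : X, (R a b c ∧ R a c b) ↔ b = c
  b3 : ∀ a b c d : X, R a b c → R a b d ∨ R d b c

/-- The shadow topology of a pretree: the complements of the shadows
`S_u^v = {x | u ∈ [x,v]}` (for `u ≠ v`) form an open subbase, i.e. the shadows form a
subbase for the closed sets. -/
def shadowTopology {X : Type*} (R : X → X → X → Prop) : TopologicalSpace X :=
  TopologicalSpace.generateFrom {S : Set X | ∃ u v : X, u ≠ v ∧ S = {x : X | R x u v}ᶜ}

namespace Stmt17Aux

variable {X : Type*} {R : X → X → X → Prop}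

lemma refl1 (hR : IsPretree R) (a b : X) : R a b b := ((hR.b2 a b b).mpr rfl).1

lemma refl2 (hR : IsPretree R) (a b : X) : R a a b := hR.b1 _ _ _ (refl1 hR b a)

lemma mid_eq (hR : IsPretree R) {a y : X} (h : R a y a) : y = a :=
  (hR.b2 a y a).mp ⟨h, refl2 hR a y⟩

lemma shadow_open {τ : TopologicalSpace X} (hgen : τ = shadowTopology R) {u v : X} (huv : u ≠ v) :
    IsOpen {x | R x u v}ᶜ := by
  rw [hgen]
  exact TopologicalSpace.GenerateOpen.basic _ ⟨u, v, huv, rfl⟩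

/-- Key topological dichotomy: if both the trace of `A` on a convex set `C` and on its
complement are dense in `A`, we get a contradiction (in a Hausdorff shadow topology). -/
lemma prop_aux [τ : TopologicalSpace X] (hR : IsPretree R)
    (hgen : τ = shadowTopology R) (ht2 : T2Space X)
    (C : Set X) (hC : ∀ u ∈ C, ∀ v ∈ C, ∀ w, R u w v → w ∈ C)
    (hD : ∀ u ∈ Cᶜ, ∀ v ∈ Cᶜ, ∀ w, R u w v → w ∈ Cᶜ)
    (A : Set X) (hA : A.Nonempty)
    (hdense : ∀ a ∈ A, ∀ U : Set X, IsOpen U → a ∈ U →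
      (U ∩ A ∩ C).Nonempty ∧ (U ∩ A ∩ Cᶜ).Nonempty) : False := by
  obtain ⟨a₀, ha₀⟩ := hA
  obtain ⟨c₀, hc₀⟩ := (hdense a₀ ha₀ Set.univ isOpen_univ trivial).1
  obtain ⟨d₀, hd₀⟩ := (hdense a₀ ha₀ Set.univ isOpen_univ trivial).2
  -- generic "step 2"
  have step2 : ∀ S : Set X, (∀ u ∈ S, ∀ v ∈ S, ∀ w, R u w v → w ∈ S) →
      (∀ a ∈ A, ∀ U : Set X, IsOpen U → a ∈ U → (U ∩ A ∩ S).Nonempty) →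
      ∀ b ∈ A, ∀ c' ∈ S, ∀ y, R b y c' → y = b ∨ y ∈ S := by
    intro S hconv hdS b hbA c' hc' y hy
    by_contra h
    push_neg at h
    obtain ⟨hyb, hyS⟩ := h
    have hOopen : IsOpen {x | R x y b}ᶜ := shadow_open hgen hyb
    have hbO : b ∈ {x | R x y b}ᶜ := fun hc => hyb (mid_eq hR hc)
    obtain ⟨p, hp⟩ := hdS b hbA _ hOopen hbO
    rcases hR.b3 b y c' p hy with h1 | h2
    · exact hp.1.1 (hR.b1 _ _ _ h1)
    · exact hyS (hconv p hp.2 c' hc' y h2)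
  have step2C := step2 C hC (fun a ha U hU haU => (hdense a ha U hU haU).1)
  have step2D := step2 Cᶜ hD (fun a ha U hU haU => (hdense a ha U hU haU).2)
  -- all intervals between points of A are trivial
  have htriv : ∀ a₁ ∈ A, ∀ a₂ ∈ A, ∀ w, R a₁ w a₂ → w = a₁ ∨ w = a₂ := by
    intro a₁ h₁ a₂ h₂ w hw
    by_cases he : a₁ = a₂
    · subst he; exact Or.inl (mid_eq hR hw)
    by_cases h₁C : a₁ ∈ C
    · by_cases h₂C : a₂ ∈ C
      · -- both in C
        have hwC : w ∈ C := hC a₁ h₁C a₂ h₂C w hw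
        rcases hR.b3 a₁ w a₂ d₀ hw with hx | hx
        · rcases step2D a₁ h₁ d₀ hd₀.2 w hx with h | h
          · exact Or.inl h
          · exact absurd hwC h
        · rcases step2D a₂ h₂ d₀ hd₀.2 w (hR.b1 _ _ _ hx) with h | h
          · exact Or.inr h
          · exact absurd hwC h
      · -- a₁ ∈ C, a₂ ∉ C
        by_cases hwc : w ∈ C
        · rcases step2D a₁ h₁ a₂ h₂C w hw with h | h
          · exact Or.inl h
          · exact absurd hwc h
        · rcases step2C a₂ h₂ a₁ h₁C w (hR.b1 _ _ _ hw) with h | h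
          · exact Or.inr h
          · exact absurd h hwc
    · by_cases h₂C : a₂ ∈ C
      · by_cases hwc : w ∈ C
        · rcases step2D a₂ h₂ a₁ h₁C w (hR.b1 _ _ _ hw) with h | h
          · exact Or.inr h
          · exact absurd hwc h
        · rcases step2C a₁ h₁ a₂ h₂C w hw with h | h
          · exact Or.inl h
          · exact absurd h hwc
      · -- both in Cᶜ
        have hwD : w ∈ Cᶜ := hD a₁ h₁C a₂ h₂C w hw
        rcases hR.b3 a₁ w a₂ c₀ hw with hx | hx
        · rcases step2C a₁ h₁ c₀ hc₀.2 w hx with h | h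
          · exact Or.inl h
          · exact absurd h hwD
        · rcases step2C a₂ h₂ c₀ hc₀.2 w (hR.b1 _ _ _ hx) with h | h
          · exact Or.inr h
          · exact absurd h hwD
  -- dichotomy for shadows
  have dich : ∀ u v : X, (∃ z ∈ A, z ≠ u ∧ R z u v) → ∀ z ∈ A, z ≠ u → R z u v := by
    rintro u v ⟨z₁, hz₁A, hz₁u, hz₁⟩ z₂ hz₂A hz₂u
    by_cases hzz : z₂ = z₁
    · subst hzz; exact hz₁
    rcases hR.b3 z₁ u v z₂ hz₁ with h | h
    · rcases htriv z₁ hz₁A z₂ hz₂A u h with h' | h'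
      · exact absurd h'.symm hz₁u
      · exact absurd h'.symm hz₂u
    · exact h
  -- cofinite traces of open sets on A
  have key : ∀ U : Set X,
      TopologicalSpace.GenerateOpen {S : Set X | ∃ u v : X, u ≠ v ∧ S = {x : X | R x u v}ᶜ} U →
      ∀ a ∈ U, a ∈ A → ∃ E : Set X, E.Finite ∧ ∀ z ∈ A, z ∉ E → z ∈ U := by
    intro U hU
    induction hU with
    | @basic s hs =>
      obtain ⟨u, v, huv, rfl⟩ := hs
      intro a haU haA
      by_cases hbig : ∃ z ∈ A, z ≠ u ∧ R z u v
      · exfalso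
        have hop : IsOpen ({x | R x u v}ᶜ) := shadow_open hgen huv
        obtain ⟨p, hp⟩ := (hdense a haA _ hop haU).1
        obtain ⟨q, hq⟩ := (hdense a haA _ hop haU).2
        have hpu : p = u := by
          by_contra h; exact hp.1.1 (dich u v hbig p hp.1.2 h)
        have hqu : q = u := by
          by_contra h; exact hq.1.1 (dich u v hbig q hq.1.2 h)
        exact hq.2 (by rw [hqu, ← hpu]; exact hp.2)
      · push_neg at hbig
        exact ⟨{u}, Set.finite_singleton u,
          fun z hz hzu => hbig z hz (by simpa using hzu)⟩
    | univ => intro a _ _; exact ⟨∅, Set.finite_empty, fun z _ _ => trivial⟩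
    | inter s t _ _ ihs iht =>
      intro a ha haA
      obtain ⟨E1, hE1, hE1'⟩ := ihs a ha.1 haA
      obtain ⟨E2, hE2, hE2'⟩ := iht a ha.2 haA
      exact ⟨E1 ∪ E2, hE1.union hE2, fun z hz hzE =>
        ⟨hE1' z hz (fun h => hzE (Or.inl h)), hE2' z hz (fun h => hzE (Or.inr h))⟩⟩
    | sUnion S _ ih =>
      intro a ha haA
      obtain ⟨s, hsS, has⟩ := ha
      obtain ⟨E, hE, hE'⟩ := ih s hsS a has haA
      exact ⟨E, hE, fun z hz hzE => ⟨s, hsS, hE' z hz hzE⟩⟩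
  have hgo : ∀ {W : Set X}, IsOpen W →
      TopologicalSpace.GenerateOpen {S : Set X | ∃ u v : X, u ≠ v ∧ S = {x : X | R x u v}ᶜ} W := by
    intro W hW
    rw [hgen] at hW
    exact hW
  -- A is finite
  have hcd : c₀ ≠ d₀ := fun h => hd₀.2 (h ▸ hc₀.2)
  obtain ⟨U, V, hUo, hVo, hcU, hdV, hUV⟩ := t2_separation hcd
  obtain ⟨E1, hE1, hE1'⟩ := key U (hgo hUo) c₀ hcU hc₀.1.2
  obtain ⟨E2, hE2, hE2'⟩ := key V (hgo hVo) d₀ hdV hd₀.1.2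
  have hAsub : A ⊆ E1 ∪ E2 := by
    intro z hz
    by_contra h
    exact Set.disjoint_iff.mp hUV ⟨hE1' z hz (fun hh => h (Or.inl hh)),
      hE2' z hz (fun hh => h (Or.inr hh))⟩
  have hAfin : A.Finite := (hE1.union hE2).subset hAsub
  -- but A must be "dense in itself", contradiction
  haveI : T1Space X := inferInstance
  have hclosed : IsClosed (A \ {c₀}) := (Set.Finite.diff hAfin : (A \ {c₀}).Finite).isClosed
  have hcW : c₀ ∈ (A \ {c₀})ᶜ := fun h => h.2 rfl
  obtain ⟨q, hq⟩ := (hdense c₀ hc₀.1.2 _ hclosed.isOpen_compl hcW).2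
  have : q = c₀ := by
    by_contra h
    exact hq.1.1 ⟨hq.1.2, h⟩
  exact hq.2 (this ▸ hc₀.2)

/-- Oscillation lemma: if `g` is monotone with range of `A` inside `n` bands of width `ε`,
then some open set meets `A` in a nonempty set of oscillation at most `2ε`. -/
lemma osc_aux [τ : TopologicalSpace X] (hR : IsPretree R)
    (hgen : τ = shadowTopology R) (ht2 : T2Space X)
    (g : X → ℝ) (hg : ∀ u w v, R u w v → min (g u) (g v) ≤ g w ∧ g w ≤ max (g u) (g v))
    (ε : ℝ) (hε : 0 < ε) :
    ∀ n : ℕ, ∀ A : Set X, A.Nonempty → ∀ t : ℝ,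
      (∀ a ∈ A, g a ∈ Set.Icc t (t + n * ε)) →
      ∃ U : Set X, IsOpen U ∧ (U ∩ A).Nonempty ∧
        ∀ p ∈ U ∩ A, ∀ q ∈ U ∩ A, |g p - g q| ≤ 2 * ε := by
  intro n
  induction n with
  | zero =>
    intro A hA t hbound
    refine ⟨Set.univ, isOpen_univ, by simpa using hA, ?_⟩
    intro p hp q hq
    have h1 := hbound p hp.2
    have h2 := hbound q hq.2
    simp only [Nat.cast_zero, zero_mul, add_zero, Set.mem_Icc] at h1 h2
    have : g p = g q := le_antisymm (by linarith [h1.1, h1.2, h2.1, h2.2])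
      (by linarith [h1.1, h1.2, h2.1, h2.2])
    rw [this]
    simpa using by positivity
  | succ n ih =>
    intro A hA t hbound
    set C : Set X := {x | g x ≤ t + ε} with hCdef
    have hCconv : ∀ u ∈ C, ∀ v ∈ C, ∀ w, R u w v → w ∈ C := by
      intro u hu v hv w hw
      have := (hg u w v hw).2
      exact le_trans this (max_le hu hv)
    have hDconv : ∀ u ∈ Cᶜ, ∀ v ∈ Cᶜ, ∀ w, R u w v → w ∈ Cᶜ := by
      intro u hu v hv w hw
      have := (hg u w v hw).1
      simp only [Set.mem_compl_iff, hCdef, Set.mem_setOf_eq, not_le] at hu hv ⊢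
      exact lt_of_lt_of_le (lt_min hu hv) this
    by_cases hDne : (A ∩ Cᶜ).Nonempty
    · by_cases hCne : (A ∩ C).Nonempty
      · by_cases hd : ∀ a ∈ A, ∀ U : Set X, IsOpen U → a ∈ U →
            ((U ∩ A ∩ C).Nonempty ∧ (U ∩ A ∩ Cᶜ).Nonempty)
        · exact absurd (prop_aux hR hgen ht2 C hCconv hDconv A hA hd) id
        · push_neg at hd
          obtain ⟨a, haA, U, hUo, haU, hfail⟩ := hd
          by_cases hP : (U ∩ A ∩ C).Nonempty
          · -- then U ∩ A ∩ Cᶜ is empty : U ∩ A ⊆ C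
            have hQ := hfail hP
            have hsub : ∀ x ∈ U ∩ A, x ∈ C := by
              intro x hx
              by_contra h
              exact Set.notMem_empty x (hQ ▸ (⟨hx, h⟩ : x ∈ U ∩ A ∩ Cᶜ))
            refine ⟨U, hUo, ⟨a, haU, haA⟩, ?_⟩
            intro p hp q hq
            have hp1 := (hbound p hp.2).1
            have hq1 := (hbound q hq.2).1
            have hp2 : g p ≤ t + ε := hsub p hp
            have hq2 : g q ≤ t + ε := hsub q hq
            rw [abs_sub_le_iff]
            constructor <;> linarith
          · -- U ∩ A ∩ C empty : recurse on U ∩ A ⊆ Cᶜ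
            have hsub : ∀ x ∈ U ∩ A, x ∈ Cᶜ := by
              intro x hx
              by_contra h
              exact hP ⟨x, hx, not_not.mp h⟩
            have hbound' : ∀ a' ∈ U ∩ A, g a' ∈ Set.Icc (t + ε) ((t + ε) + n * ε) := by
              intro a' ha'
              have h1 : ¬ g a' ≤ t + ε := hsub a' ha'
              have h2 := (hbound a' ha'.2).2
              push_cast at h2
              exact ⟨le_of_lt (not_le.mp h1), by linarith⟩
            obtain ⟨V, hVo, hVne, hVosc⟩ := ih (U ∩ A) ⟨a, haU, haA⟩ (t + ε) hbound'
            refine ⟨U ∩ V, hUo.inter hVo, ?_, ?_⟩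
            · obtain ⟨x, hx⟩ := hVne
              exact ⟨x, ⟨hx.2.1, hx.1⟩, hx.2.2⟩
            · intro p hp q hq
              exact hVosc p ⟨hp.1.2, hp.1.1, hp.2⟩ q ⟨hq.1.2, hq.1.1, hq.2⟩
      · -- A ∩ C empty : all of A is in Cᶜ
        have hsub : ∀ x ∈ A, x ∈ Cᶜ := by
          intro x hx
          by_contra h
          exact hCne ⟨x, hx, not_not.mp h⟩
        have hbound' : ∀ a' ∈ A, g a' ∈ Set.Icc (t + ε) ((t + ε) + n * ε) := by
          intro a' ha'
          have h1 : ¬ g a' ≤ t + ε := hsub a' ha'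
          have h2 := (hbound a' ha').2
          push_cast at h2
          exact ⟨le_of_lt (not_le.mp h1), by linarith⟩
        exact ih A hA (t + ε) hbound'
    · -- A ∩ Cᶜ empty : all of A in C
      have hsub : ∀ x ∈ A, x ∈ C := by
        intro x hx
        by_contra h
        exact hDne ⟨x, hx, h⟩
      refine ⟨Set.univ, isOpen_univ, by simpa using hA, ?_⟩
      intro p hp q hq
      have hp1 := (hbound p hp.2).1
      have hq1 := (hbound q hq.2).1
      have hp2 : g p ≤ t + ε := hsub p hp.2
      have hq2 : g q ≤ t + ε := hsub q hq.2
      rw [abs_sub_le_iff]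
      constructor <;> linarith

end Stmt17Aux

/-- If the shadow topology of a pretree is compact Hausdorff, then every
monotone real-valued function on it is fragmented: its restriction to every nonempty closed
subset has a point of continuity. -/
theorem stmt_17 {X : Type*} (R : X → X → X → Prop) (hR : IsPretree R)
    (hcomp : @CompactSpace X (shadowTopology R))
    (ht2 : @T2Space X (shadowTopology R))
    (f : X → ℝ)
    (hmono : ∀ u w v : X, R u w v → min (f u) (f v) ≤ f w ∧ f w ≤ max (f u) (f v)) :
    ∀ Y : Set X, Y.Nonempty → @IsClosed X (shadowTopology R) Y →
      ∃ y ∈ Y, @ContinuousWithinAt X ℝ (shadowTopology R) _ f Y y := by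
  letI τ : TopologicalSpace X := shadowTopology R
  haveI : CompactSpace X := hcomp
  haveI : T2Space X := ht2
  intro Y hYne hYclosed
  set g : X → ℝ := fun x => Real.arctan (f x) with hgdef
  have harctan_mono : Monotone Real.arctan := Real.arctan_strictMono.monotone
  have hg : ∀ u w v, R u w v → min (g u) (g v) ≤ g w ∧ g w ≤ max (g u) (g v) := by
    intro u w v h
    obtain ⟨h1, h2⟩ := hmono u w v h
    constructor
    · calc min (g u) (g v) = Real.arctan (min (f u) (f v)) := (harctan_mono.map_min).symm
        _ ≤ g w := harctan_mono h1
    · calc g w ≤ Real.arctan (max (f u) (f v)) := harctan_mono h2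
        _ = max (g u) (g v) := harctan_mono.map_max
  have hpi : Real.pi ≤ 4 := Real.pi_le_four
  have hgIcc : ∀ x, g x ∈ Set.Icc (-2 : ℝ) 2 := by
    intro x
    have h1 := Real.arctan_lt_pi_div_two (f x)
    have h2 := Real.neg_pi_div_two_lt_arctan (f x)
    constructor <;> [skip; skip] <;> simp only [hgdef] <;> nlinarith
  -- the subtype Y is a nonempty compact Hausdorff (hence Baire) space
  haveI hTcomp : CompactSpace Y := isCompact_iff_compactSpace.mp hYclosed.isCompact
  obtain ⟨y₀, hy₀⟩ := hYne
  haveI : Nonempty Y := ⟨⟨y₀, hy₀⟩⟩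
  haveI : BaireSpace Y := inferInstance
  -- the dense open sets of small oscillation
  set E : ℕ → Set Y := fun n =>
    {y | ∃ V : Set Y, IsOpen V ∧ y ∈ V ∧
      ∀ p ∈ V, ∀ q ∈ V, |g p.1 - g q.1| ≤ 1 / (n + 1)} with hEdef
  have hEopen : ∀ n, IsOpen (E n) := by
    intro n
    rw [isOpen_iff_forall_mem_open]
    rintro y ⟨V, hVo, hyV, hVosc⟩
    exact ⟨V, fun p hp => ⟨V, hVo, hp, hVosc⟩, hVo, hyV⟩
  have hEdense : ∀ n, Dense (E n) := by
    intro n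
    rw [dense_iff_inter_open]
    intro W hWo hWne
    have hn1 : (0:ℝ) < 1 / (n + 1) := by positivity
    set ε' : ℝ := 1 / (n + 1) / 2 with hε'def
    have hε' : 0 < ε' := by positivity
    set m : ℕ := ⌈(4:ℝ)/ε'⌉₊ with hmdef
    have hm : (4:ℝ) ≤ m * ε' := by
      have h := Nat.le_ceil ((4:ℝ)/ε')
      calc (4:ℝ) = 4/ε' * ε' := by field_simp
        _ ≤ m * ε' := by
          apply mul_le_mul_of_nonneg_right h (le_of_lt hε')
    set A : Set X := Subtype.val '' W with hAdef
    have hAne : A.Nonempty := hWne.image _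
    have hbound : ∀ a ∈ A, g a ∈ Set.Icc (-2 : ℝ) (-2 + m * ε') :=
      fun a _ => ⟨(hgIcc a).1, le_trans (hgIcc a).2 (by linarith)⟩
    obtain ⟨U, hUo, hUAne, hUosc⟩ :=
      Stmt17Aux.osc_aux hR rfl ‹T2Space X› g hg ε' hε' m A hAne (-2) hbound
    obtain ⟨x, hxU, hxA⟩ := hUAne
    obtain ⟨w₀, hw₀W, hw₀val⟩ := hxA
    refine ⟨w₀, hw₀W, ?_⟩
    refine ⟨Subtype.val ⁻¹' U ∩ W,
      (hUo.preimage continuous_subtype_val).inter hWo,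
      ⟨by simp only [Set.mem_preimage]; rw [hw₀val]; exact hxU, hw₀W⟩, ?_⟩
    intro p hp q hq
    have hpUA : p.1 ∈ U ∩ A := ⟨hp.1, ⟨p, hp.2, rfl⟩⟩
    have hqUA : q.1 ∈ U ∩ A := ⟨hq.1, ⟨q, hq.2, rfl⟩⟩
    have := hUosc p.1 hpUA q.1 hqUA
    calc |g p.1 - g q.1| ≤ 2 * ε' := this
      _ = 1 / (n + 1) := by rw [hε'def]; ring
  have hD := dense_iInter_of_isOpen hEopen hEdense
  obtain ⟨y, hy⟩ := hD.nonempty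
  refine ⟨y.1, y.2, ?_⟩
  have hy' : ∀ n, y ∈ E n := Set.mem_iInter.mp hy
  -- continuity of the restriction of g at y
  have hcont : ContinuousAt (Y.restrict g) y := by
    rw [ContinuousAt, Metric.tendsto_nhds]
    intro δ hδ
    obtain ⟨n, hn⟩ := exists_nat_one_div_lt hδ
    obtain ⟨V, hVo, hyV, hVosc⟩ := hy' n
    filter_upwards [hVo.mem_nhds hyV] with p hp
    rw [Real.dist_eq]
    exact lt_of_le_of_lt (hVosc p hp y hyV) (by exact_mod_cast hn)
  have hg_cwa : ContinuousWithinAt g Y y.1 := by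
    rw [continuousWithinAt_iff_continuousAt_restrict g y.2]
    convert hcont
    rfl
  have htan : ContinuousAt Real.tan (g y.1) := by
    rw [Real.continuousAt_tan]
    simp only [hgdef]
    exact ne_of_gt (Real.cos_arctan_pos (f y.1))
  have hcomp_cwa := htan.comp_continuousWithinAt hg_cwa
  have hfg : (Real.tan ∘ g) = f := funext fun x => Real.tan_arctan (f x)
  rw [← hfg]
  exact hcomp_cwa
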